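/- arXiv:1706.08294 — 6 statements merged into one kernel-verified Lean document; each statement's English description precedes it below -/
import Mathlib

section
/- Let ξ be a (1,2)-tensor on an n-dimensional inner product space V with ξ_X ∈ so(V) for each X, and let (e_i) be an orthonormal basis. Define χ = Σ_i ξ_{e_i} e_i, ξ^alt_X Y = (1/2)(ξ_X Y - ξ_Y X), ξ^sym_X Y = (1/2)(ξ_X Y + ξ_Y X). Then Σ_{i,j} ⟨[ξ_{e_i}, ξ_{e_j}] e_j, e_i⟩ = -|χ|² + |ξ^sym|² - |ξ^alt|², where |ξ^sym|² = Σ_{i,j} |ξ^sym_{e_i} e_j|² and similarly for ξ^alt. -/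
open RealInnerProductSpace

/-- For a bilinear `ξ` with each `ξ_X ∈ so(V)`,
`Σ_{i,j} ⟨[ξ_{e_i}, ξ_{e_j}] e_j, e_i⟩ = -|χ|² + |ξ^sym|² - |ξ^alt|²`,
where `χ = ∑_i ξ_{e_i} e_i`. -/
theorem stmt4 {V : Type*} [NormedAddCommGroup V] [InnerProductSpace ℝ V]
    {m : ℕ} (e : OrthonormalBasis (Fin m) ℝ V)
    (ξ : V →ₗ[ℝ] V →ₗ[ℝ] V)
    (hskew : ∀ X Y Z, ⟪ξ X Y, Z⟫ = -⟪Y, ξ X Z⟫) :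
    let χ := ∑ i, ξ (e i) (e i)
    let ξalt : V → V → V := fun X Y => (1/2 : ℝ) • (ξ X Y - ξ Y X)
    let ξsym : V → V → V := fun X Y => (1/2 : ℝ) • (ξ X Y + ξ Y X)
    (∑ i, ∑ j, ⟪ξ (e i) (ξ (e j) (e j)) - ξ (e j) (ξ (e i) (e j)), e i⟫)
      = -⟪χ, χ⟫ + (∑ i, ∑ j, ⟪ξsym (e i) (e j), ξsym (e i) (e j)⟫)
        - (∑ i, ∑ j, ⟪ξalt (e i) (e j), ξalt (e i) (e j)⟫) := by
  intro χ ξalt ξsym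
  have h1 : (∑ i, ∑ j, ⟪ξ (e i) (ξ (e j) (e j)), e i⟫) = -⟪χ, χ⟫ := by
    have key : ∀ i, (∑ j, ⟪ξ (e i) (ξ (e j) (e j)), e i⟫) = -⟪χ, ξ (e i) (e i)⟫ := by
      intro i
      have : (∑ j, ⟪ξ (e i) (ξ (e j) (e j)), e i⟫) = ⟪ξ (e i) χ, e i⟫ := by
        simp only [χ, map_sum, sum_inner]
      rw [this, hskew]
    rw [Finset.sum_congr rfl (fun i _ => key i)]
    simp [← inner_sum, χ]
  have h2 : ∀ i j, ⟪ξ (e j) (ξ (e i) (e j)), e i⟫ = -⟪ξ (e i) (e j), ξ (e j) (e i)⟫ := by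
    intro i j; rw [hskew]
  have h3 : ∀ i j : Fin m, ⟪ξsym (e i) (e j), ξsym (e i) (e j)⟫
      - ⟪ξalt (e i) (e j), ξalt (e i) (e j)⟫ = ⟪ξ (e i) (e j), ξ (e j) (e i)⟫ := by
    intro i j
    simp only [ξsym, ξalt, inner_smul_left, inner_smul_right, inner_add_left,
      inner_add_right, inner_sub_left, inner_sub_right, RCLike.conj_to_real]
    rw [real_inner_comm (ξ (e j) (e i)) (ξ (e i) (e j))]
    ring
  calc (∑ i, ∑ j, ⟪ξ (e i) (ξ (e j) (e j)) - ξ (e j) (ξ (e i) (e j)), e i⟫)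
      = (∑ i, ∑ j, ⟪ξ (e i) (ξ (e j) (e j)), e i⟫)
        + ∑ i, ∑ j, ⟪ξ (e i) (e j), ξ (e j) (e i)⟫ := by
        rw [← Finset.sum_add_distrib]
        refine Finset.sum_congr rfl fun i _ => ?_
        rw [← Finset.sum_add_distrib]
        refine Finset.sum_congr rfl fun j _ => ?_
        rw [inner_sub_left, h2]; ring
    _ = -⟪χ, χ⟫ + (∑ i, ∑ j, ⟪ξsym (e i) (e j), ξsym (e i) (e j)⟫)
        - (∑ i, ∑ j, ⟪ξalt (e i) (e j), ξalt (e i) (e j)⟫) := by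
        rw [h1]
        have : (∑ i, ∑ j, ⟪ξ (e i) (e j), ξ (e j) (e i)⟫)
            = (∑ i, ∑ j, ⟪ξsym (e i) (e j), ξsym (e i) (e j)⟫)
              - (∑ i, ∑ j, ⟪ξalt (e i) (e j), ξalt (e i) (e j)⟫) := by
          rw [← Finset.sum_sub_distrib]
          refine Finset.sum_congr rfl fun i _ => ?_
          rw [← Finset.sum_sub_distrib]
          exact Finset.sum_congr rfl fun j _ => (h3 i j).symm
        rw [this]; ring
end

section
/- For a W₄-type tensor ξ defined by -4ξ_X Y = θ(Y)X + θ(JY)JX - ⟨X,Y⟩θ^♯ - ⟨X,JY⟩Jθ^♯ on a 2n-dimensional inner product space with orthogonal complex structure J, the quadratic invariants satisfy i₂ := Σ_{i,j,k}⟨ξ_{e_i}e_j,e_k⟩⟨ξ_{e_j}e_i,e_k⟩ = 0 and i₄ := |Σ_i ξ_{e_i}e_i|² = ((n-1)/2) i₁, where i₁ = Σ_{i,j,k}⟨ξ_{e_i}e_j,e_k⟩². -/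
open RealInnerProductSpace

/-- For the W₄-type tensor `ξ` defined by
`-4ξ_X Y = θ(Y)X + θ(JY)JX - ⟨X,Y⟩θ♯ - ⟨X,JY⟩Jθ♯`, the quadratic invariants
satisfy `i₂ = 0` and `i₄ = ((n-1)/2) i₁`. -/
theorem stmt8 {V : Type*} [NormedAddCommGroup V] [InnerProductSpace ℝ V]
    (n : ℕ) (e : OrthonormalBasis (Fin (2*n)) ℝ V)
    (J : V →ₗ[ℝ] V)
    (hJ2 : ∀ X, J (J X) = -X)
    (hJm : ∀ X Y, ⟪J X, J Y⟫ = ⟪X, Y⟫)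
    (θs : V) (θ : V → ℝ) (hθ : ∀ X, θ X = ⟪X, θs⟫)
    (ξ : V → V → V)
    (hξ : ∀ X Y, (-4 : ℝ) • ξ X Y
      = θ Y • X + θ (J Y) • J X - ⟪X, Y⟫ • θs - ⟪X, J Y⟫ • J θs) :
    let i₁ : ℝ := ∑ i, ∑ j, ∑ k, ⟪ξ (e i) (e j), e k⟫ ^ 2
    let i₂ : ℝ := ∑ i, ∑ j, ∑ k, ⟪ξ (e i) (e j), e k⟫ * ⟪ξ (e j) (e i), e k⟫
    let i₄ : ℝ := ⟪∑ i, ξ (e i) (e i), ∑ i, ξ (e i) (e i)⟫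
    i₂ = 0 ∧ i₄ = (((n : ℝ) - 1)/2) * i₁ := by
  intro i₁ i₂ i₄
  have hskew : ∀ X Y : V, ⟪J X, Y⟫ = -⟪X, J Y⟫ := by
    intro X Y
    have h := hJm X (J Y)
    rw [hJ2, inner_neg_right] at h
    linarith
  have hξ' : ∀ X Y, ξ X Y = (-(1:ℝ)/4) • (θ Y • X + θ (J Y) • J X - ⟪X, Y⟫ • θs - ⟪X, J Y⟫ • J θs) := by
    intro X Y; rw [← hξ, smul_smul]; norm_num
  have horth : ∀ i j, ⟪e i, e j⟫ = if i = j then (1:ℝ) else 0 :=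
    orthonormal_iff_ite.mp e.orthonormal
  have hJθ : ⟪θs, J θs⟫ = 0 := by
    have h1 := hskew θs θs
    have h2 := real_inner_comm (J θs) θs
    linarith [h1, h2]
  have hk : ∀ u v : V, (∑ k, ⟪u, e k⟫ * ⟪v, e k⟫) = ⟪u, v⟫ := by
    intro u v
    rw [← e.sum_inner_mul_inner u v]
    exact Finset.sum_congr rfl fun k _ => by rw [real_inner_comm v]
  have L_AA : ∑ j, ⟪e j, θs⟫ * ⟪e j, θs⟫ = ⟪θs, θs⟫ := by
    rw [← e.sum_inner_mul_inner θs θs]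
    exact Finset.sum_congr rfl fun j _ => by rw [real_inner_comm θs (e j)]
  have L_BB : ∑ j, ⟪e j, J θs⟫ * ⟪e j, J θs⟫ = ⟪θs, θs⟫ := by
    rw [← hJm θs θs, ← e.sum_inner_mul_inner (J θs) (J θs)]
    exact Finset.sum_congr rfl fun j _ => by rw [real_inner_comm (J θs) (e j)]
  have L_CA : ∀ i, ∑ j, ⟪e j, J (e i)⟫ * ⟪e j, θs⟫ = -⟪e i, J θs⟫ := by
    intro i
    rw [← hskew (e i) θs, ← e.sum_inner_mul_inner (J (e i)) θs]
    exact Finset.sum_congr rfl fun j _ => by rw [real_inner_comm (J (e i)) (e j)]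
  have L_CB : ∀ i, ∑ j, ⟪e j, J (e i)⟫ * ⟪e j, J θs⟫ = ⟪e i, θs⟫ := by
    intro i
    rw [← hJm (e i) θs, ← e.sum_inner_mul_inner (J (e i)) (J θs)]
    exact Finset.sum_congr rfl fun j _ => by rw [real_inner_comm (J (e i)) (e j)]
  have L_CC : ∀ i, ∑ j, ⟪e j, J (e i)⟫ * ⟪e j, J (e i)⟫ = 1 := by
    intro i
    have h1 : ⟪J (e i), J (e i)⟫ = (1:ℝ) := by rw [hJm, horth, if_pos rfl]
    rw [← h1, ← e.sum_inner_mul_inner (J (e i)) (J (e i))]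
    exact Finset.sum_congr rfl fun j _ => by rw [real_inner_comm (J (e i)) (e j)]
  -- atom rewriting facts, for fixed i j
  have hG : ∀ i j, ⟪ξ (e i) (e j), ξ (e j) (e i)⟫ =
      (1/16) * (⟪θs,θs⟫ * ((if i = j then (1:ℝ) else 0) * (if i = j then (1:ℝ) else 0))
        - ⟪e i, θs⟫ * ((if i = j then (1:ℝ) else 0) * ⟪e j, θs⟫)
        - ⟪e i, J θs⟫ * ((if i = j then (1:ℝ) else 0) * ⟪e j, J θs⟫)
        + ⟪e i, θs⟫ * (⟪e j, J (e i)⟫ * ⟪e j, J θs⟫)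
        - ⟪e i, J θs⟫ * (⟪e j, J (e i)⟫ * ⟪e j, θs⟫)
        - ⟪θs,θs⟫ * (⟪e j, J (e i)⟫ * ⟪e j, J (e i)⟫)) := by
    intro i j
    have r1 : ⟪J (e j), θs⟫ = -⟪e j, J θs⟫ := hskew _ _
    have r2 : ⟪J (e i), θs⟫ = -⟪e i, J θs⟫ := hskew _ _
    have r3 : ⟪θs, J (e j)⟫ = -⟪e j, J θs⟫ := by rw [real_inner_comm]; exact hskew _ _
    have r3' : ⟪θs, J (e i)⟫ = -⟪e i, J θs⟫ := by rw [real_inner_comm]; exact hskew _ _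
    have r4 : ⟪J θs, e j⟫ = ⟪e j, J θs⟫ := real_inner_comm _ _
    have r4' : ⟪J θs, e i⟫ = ⟪e i, J θs⟫ := real_inner_comm _ _
    have r6 : ⟪J θs, θs⟫ = 0 := by rw [real_inner_comm]; exact hJθ
    have r7 : ⟪e i, J (e j)⟫ = -⟪e j, J (e i)⟫ := by rw [real_inner_comm, hskew]
    have r9 : ⟪J (e j), e i⟫ = -⟪e j, J (e i)⟫ := by rw [real_inner_comm]; exact r7
    have r8 : ⟪J (e i), e j⟫ = ⟪e j, J (e i)⟫ := real_inner_comm _ _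
    have r10 : ⟪e j, e i⟫ = if i = j then (1:ℝ) else 0 := by
      rw [real_inner_comm]; exact horth i j
    have r12 : ⟪θs, e j⟫ = ⟪e j, θs⟫ := real_inner_comm _ _
    have r13 : ⟪θs, e i⟫ = ⟪e i, θs⟫ := real_inner_comm _ _
    rw [hξ' (e i) (e j), hξ' (e j) (e i)]
    simp only [real_inner_smul_left, real_inner_smul_right, inner_sub_left, inner_sub_right,
      inner_add_left, inner_add_right, hθ, hJm]
    simp only [r1, r2, r3, r3', r4, r4', r6, r7, r9, r8, r10, horth i j, r12, r13, hJθ]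
    ring
  have hG' : ∀ i j, ⟪ξ (e i) (e j), ξ (e i) (e j)⟫ =
      (1/16) * (⟪e j, θs⟫ * ⟪e j, θs⟫ + ⟪e j, J θs⟫ * ⟪e j, J θs⟫
        + ⟪θs,θs⟫ * ((if i = j then (1:ℝ) else 0) * (if i = j then (1:ℝ) else 0))
        - 2 * ⟪e i, θs⟫ * ((if i = j then (1:ℝ) else 0) * ⟪e j, θs⟫)
        - 2 * ⟪e i, J θs⟫ * ((if i = j then (1:ℝ) else 0) * ⟪e j, J θs⟫)
        - 2 * ⟪e i, θs⟫ * (⟪e j, J (e i)⟫ * ⟪e j, J θs⟫)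
        + 2 * ⟪e i, J θs⟫ * (⟪e j, J (e i)⟫ * ⟪e j, θs⟫)
        + ⟪θs,θs⟫ * (⟪e j, J (e i)⟫ * ⟪e j, J (e i)⟫)) := by
    intro i j
    have r1 : ⟪J (e j), θs⟫ = -⟪e j, J θs⟫ := hskew _ _
    have r2 : ⟪J (e i), θs⟫ = -⟪e i, J θs⟫ := hskew _ _
    have r3 : ⟪θs, J (e j)⟫ = -⟪e j, J θs⟫ := by rw [real_inner_comm]; exact hskew _ _
    have r3' : ⟪θs, J (e i)⟫ = -⟪e i, J θs⟫ := by rw [real_inner_comm]; exact hskew _ _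
    have r4 : ⟪J θs, e j⟫ = ⟪e j, J θs⟫ := real_inner_comm _ _
    have r4' : ⟪J θs, e i⟫ = ⟪e i, J θs⟫ := real_inner_comm _ _
    have r6 : ⟪J θs, θs⟫ = 0 := by rw [real_inner_comm]; exact hJθ
    have r7 : ⟪e i, J (e j)⟫ = -⟪e j, J (e i)⟫ := by rw [real_inner_comm, hskew]
    have r9 : ⟪J (e j), e i⟫ = -⟪e j, J (e i)⟫ := by rw [real_inner_comm]; exact r7
    have r8 : ⟪J (e i), e j⟫ = ⟪e j, J (e i)⟫ := real_inner_comm _ _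
    have r14 : ⟪J (e i), e i⟫ = 0 := by
      have := hskew (e i) (e i)
      have h2 := real_inner_comm (J (e i)) (e i)
      linarith
    have r15 : ⟪e i, J (e i)⟫ = 0 := by
      rw [real_inner_comm]; exact r14
    have r10 : ⟪e j, e i⟫ = if i = j then (1:ℝ) else 0 := by
      rw [real_inner_comm]; exact horth i j
    have r16 : ⟪e i, e i⟫ = (1:ℝ) := by rw [horth, if_pos rfl]
    have r12 : ⟪θs, e j⟫ = ⟪e j, θs⟫ := real_inner_comm _ _
    have r13 : ⟪θs, e i⟫ = ⟪e i, θs⟫ := real_inner_comm _ _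
    rw [hξ' (e i) (e j)]
    simp only [real_inner_smul_left, real_inner_smul_right, inner_sub_left, inner_sub_right,
      inner_add_left, inner_add_right, hθ, hJm]
    simp only [r1, r2, r3, r3', r4, r4', r6, r7, r9, r8, r14, r15, r10, r16, horth i j, r12, r13, hJθ]
    ring
  -- the j-sums
  have key2 : ∀ i, (∑ j, ⟪ξ (e i) (e j), ξ (e j) (e i)⟫) = 0 := by
    intro i
    rw [Finset.sum_congr rfl fun j _ => hG i j, ← Finset.mul_sum]
    rw [show (∑ j, (⟪θs,θs⟫ * ((if i = j then (1:ℝ) else 0) * (if i = j then (1:ℝ) else 0))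
        - ⟪e i, θs⟫ * ((if i = j then (1:ℝ) else 0) * ⟪e j, θs⟫)
        - ⟪e i, J θs⟫ * ((if i = j then (1:ℝ) else 0) * ⟪e j, J θs⟫)
        + ⟪e i, θs⟫ * (⟪e j, J (e i)⟫ * ⟪e j, J θs⟫)
        - ⟪e i, J θs⟫ * (⟪e j, J (e i)⟫ * ⟪e j, θs⟫)
        - ⟪θs,θs⟫ * (⟪e j, J (e i)⟫ * ⟪e j, J (e i)⟫)))
      = ⟪θs,θs⟫ * (∑ j, ((if i = j then (1:ℝ) else 0) * (if i = j then (1:ℝ) else 0)))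
        - ⟪e i, θs⟫ * (∑ j, ((if i = j then (1:ℝ) else 0) * ⟪e j, θs⟫))
        - ⟪e i, J θs⟫ * (∑ j, ((if i = j then (1:ℝ) else 0) * ⟪e j, J θs⟫))
        + ⟪e i, θs⟫ * (∑ j, (⟪e j, J (e i)⟫ * ⟪e j, J θs⟫))
        - ⟪e i, J θs⟫ * (∑ j, (⟪e j, J (e i)⟫ * ⟪e j, θs⟫))
        - ⟪θs,θs⟫ * (∑ j, (⟪e j, J (e i)⟫ * ⟪e j, J (e i)⟫)) from by
      simp only [Finset.mul_sum, ← Finset.sum_sub_distrib, ← Finset.sum_add_distrib]]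
    rw [L_CA i, L_CB i, L_CC i]
    simp only [ite_mul, one_mul, zero_mul, Finset.sum_ite_eq, Finset.mem_univ, if_true]
    ring
  have key1 : ∀ i, (∑ j, ⟪ξ (e i) (e j), ξ (e i) (e j)⟫)
      = (1/4) * (⟪θs,θs⟫ - ⟪e i, θs⟫ * ⟪e i, θs⟫ - ⟪e i, J θs⟫ * ⟪e i, J θs⟫) := by
    intro i
    rw [Finset.sum_congr rfl fun j _ => hG' i j, ← Finset.mul_sum]
    rw [show (∑ j, (⟪e j, θs⟫ * ⟪e j, θs⟫ + ⟪e j, J θs⟫ * ⟪e j, J θs⟫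
        + ⟪θs,θs⟫ * ((if i = j then (1:ℝ) else 0) * (if i = j then (1:ℝ) else 0))
        - 2 * ⟪e i, θs⟫ * ((if i = j then (1:ℝ) else 0) * ⟪e j, θs⟫)
        - 2 * ⟪e i, J θs⟫ * ((if i = j then (1:ℝ) else 0) * ⟪e j, J θs⟫)
        - 2 * ⟪e i, θs⟫ * (⟪e j, J (e i)⟫ * ⟪e j, J θs⟫)
        + 2 * ⟪e i, J θs⟫ * (⟪e j, J (e i)⟫ * ⟪e j, θs⟫)
        + ⟪θs,θs⟫ * (⟪e j, J (e i)⟫ * ⟪e j, J (e i)⟫)))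
      = (∑ j, ⟪e j, θs⟫ * ⟪e j, θs⟫) + (∑ j, ⟪e j, J θs⟫ * ⟪e j, J θs⟫)
        + ⟪θs,θs⟫ * (∑ j, ((if i = j then (1:ℝ) else 0) * (if i = j then (1:ℝ) else 0)))
        - 2 * ⟪e i, θs⟫ * (∑ j, ((if i = j then (1:ℝ) else 0) * ⟪e j, θs⟫))
        - 2 * ⟪e i, J θs⟫ * (∑ j, ((if i = j then (1:ℝ) else 0) * ⟪e j, J θs⟫))
        - 2 * ⟪e i, θs⟫ * (∑ j, (⟪e j, J (e i)⟫ * ⟪e j, J θs⟫))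
        + 2 * ⟪e i, J θs⟫ * (∑ j, (⟪e j, J (e i)⟫ * ⟪e j, θs⟫))
        + ⟪θs,θs⟫ * (∑ j, (⟪e j, J (e i)⟫ * ⟪e j, J (e i)⟫)) from by
      simp only [Finset.mul_sum, ← Finset.sum_sub_distrib, ← Finset.sum_add_distrib]]
    rw [L_AA, L_BB, L_CA i, L_CB i, L_CC i]
    simp only [ite_mul, one_mul, zero_mul, Finset.sum_ite_eq, Finset.mem_univ, if_true]
    ring
  -- i₁ value
  have hi1 : i₁ = ((n:ℝ) - 1) * ⟪θs,θs⟫ / 2 := by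
    show (∑ i, ∑ j, ∑ k, ⟪ξ (e i) (e j), e k⟫ ^ 2) = ((n:ℝ) - 1) * ⟪θs,θs⟫ / 2
    have : ∀ i j : Fin (2*n), (∑ k, ⟪ξ (e i) (e j), e k⟫ ^ 2) = ⟪ξ (e i) (e j), ξ (e i) (e j)⟫ := by
      intro i j
      rw [← hk (ξ (e i) (e j)) (ξ (e i) (e j))]
      exact Finset.sum_congr rfl fun k _ => by ring
    rw [Finset.sum_congr rfl fun i _ => Finset.sum_congr rfl fun j _ => this i j]
    rw [Finset.sum_congr rfl fun i _ => key1 i]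
    rw [show (∑ i : Fin (2*n), (1/4) * (⟪θs,θs⟫ - ⟪e i, θs⟫ * ⟪e i, θs⟫ - ⟪e i, J θs⟫ * ⟪e i, J θs⟫))
      = (1/4) * ((∑ _i : Fin (2*n), ⟪θs,θs⟫) - (∑ i, ⟪e i, θs⟫ * ⟪e i, θs⟫)
          - (∑ i, ⟪e i, J θs⟫ * ⟪e i, J θs⟫)) from by
      simp only [Finset.mul_sum, ← Finset.sum_sub_distrib]]
    rw [L_AA, L_BB, Finset.sum_const, Finset.card_univ, Fintype.card_fin, nsmul_eq_mul]
    push_cast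
    ring
  have hi2 : i₂ = 0 := by
    show (∑ i, ∑ j, ∑ k, ⟪ξ (e i) (e j), e k⟫ * ⟪ξ (e j) (e i), e k⟫) = 0
    have : ∀ i j : Fin (2*n), (∑ k, ⟪ξ (e i) (e j), e k⟫ * ⟪ξ (e j) (e i), e k⟫)
        = ⟪ξ (e i) (e j), ξ (e j) (e i)⟫ := fun i j => hk _ _
    rw [Finset.sum_congr rfl fun i _ => Finset.sum_congr rfl fun j _ => this i j]
    rw [Finset.sum_congr rfl fun i _ => key2 i]
    simp
  -- i₄ value
  have hΞ : (∑ i, ξ (e i) (e i)) = (((n:ℝ) - 1)/2) • θs := by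
    have h4 : (-4:ℝ) • (∑ i, ξ (e i) (e i)) = (2 - 2*(n:ℝ)) • θs := by
      rw [Finset.smul_sum]
      rw [Finset.sum_congr rfl fun i _ => hξ (e i) (e i)]
      rw [show (∑ i, (θ (e i) • e i + θ (J (e i)) • J (e i) - ⟪e i, e i⟫ • θs - ⟪e i, J (e i)⟫ • J θs))
        = (∑ i, θ (e i) • e i) + (∑ i, θ (J (e i)) • J (e i)) - (∑ i : Fin (2*n), ⟪e i, e i⟫ • θs)
          - (∑ i, ⟪e i, J (e i)⟫ • J θs) from by
        simp only [← Finset.sum_sub_distrib, ← Finset.sum_add_distrib]]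
      have s1 : (∑ i, θ (e i) • e i) = θs := by
        simp only [hθ]; exact e.sum_repr' θs
      have s2 : (∑ i, θ (J (e i)) • J (e i)) = θs := by
        have : ∀ i : Fin (2*n), θ (J (e i)) • J (e i) = J ((-⟪e i, J θs⟫) • e i) := by
          intro i
          rw [map_smul]
          congr 1
          rw [hθ]
          exact hskew _ _
        rw [Finset.sum_congr rfl fun i _ => this i, ← map_sum]
        have : (∑ i, (-⟪e i, J θs⟫) • e i) = -(J θs) := by
          rw [show (∑ i, (-⟪e i, J θs⟫) • e i) = -(∑ i, ⟪e i, J θs⟫ • e i) from by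
            simp [neg_smul, Finset.sum_neg_distrib]]
          rw [e.sum_repr' (J θs)]
        rw [this, map_neg, hJ2, neg_neg]
      have s3 : (∑ i : Fin (2*n), ⟪e i, e i⟫ • θs) = (2*(n:ℝ)) • θs := by
        rw [Finset.sum_congr rfl fun i _ => by rw [horth i i, if_pos rfl]]
        rw [Finset.sum_const, Finset.card_univ, Fintype.card_fin]
        rw [← Nat.cast_smul_eq_nsmul ℝ]
        push_cast
        norm_num
      have s4 : (∑ i, ⟪e i, J (e i)⟫ • J θs) = 0 := by
        apply Finset.sum_eq_zero
        intro i _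
        have r14 : ⟪e i, J (e i)⟫ = (0:ℝ) := by
          have h1 := hskew (e i) (e i)
          have h2 := real_inner_comm (J (e i)) (e i)
          linarith
        rw [r14, zero_smul]
      rw [s1, s2, s3, s4, sub_zero]
      module
    have := congrArg (fun v : V => (-(1:ℝ)/4) • v) h4
    simp only [smul_smul] at this
    rw [show (-(1:ℝ)/4) * (-4:ℝ) = 1 from by norm_num, one_smul] at this
    rw [this]
    congr 1
    ring
  have hi4 : i₄ = (((n:ℝ) - 1)/2)^2 * ⟪θs,θs⟫ := by
    show ⟪∑ i, ξ (e i) (e i), ∑ i, ξ (e i) (e i)⟫ = (((n:ℝ) - 1)/2)^2 * ⟪θs,θs⟫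
    rw [hΞ, real_inner_smul_left, real_inner_smul_right]
    ring
  exact ⟨hi2, by rw [hi4, hi1]; ring⟩
end

section
/- Let ξ be a bilinear V-valued map on an inner product space V with each ξ_X skew-symmetric, and suppose the cyclic sum vanishes: ⟨ξ_X Y, Z⟩ + ⟨ξ_Z X, Y⟩ + ⟨ξ_Y Z, X⟩ = 0 for all X,Y,Z (the W₂ condition). Then Σ_{i,j}⟨ξ_{e_i}e_j, ξ_{e_j}e_i⟩ = (1/2)|ξ|², i.e. i₂ = (1/2)i₁. -/
open RealInnerProductSpace

lemma sum_cyc {m : ℕ} (f : Fin m → Fin m → Fin m → ℝ) :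
    ∑ i, ∑ j, ∑ k, f i j k = ∑ i, ∑ j, ∑ k, f j k i := by
  calc ∑ i, ∑ j, ∑ k, f i j k
      = ∑ i, ∑ k, ∑ j, f i j k := Finset.sum_congr rfl fun i _ => Finset.sum_comm
    _ = ∑ k, ∑ i, ∑ j, f i j k := Finset.sum_comm

/-- If `ξ` is bilinear with each `ξ_X` skew-symmetric and the cyclic
sum `⟨ξ_X Y, Z⟩ + ⟨ξ_Z X, Y⟩ + ⟨ξ_Y Z, X⟩` vanishes (the W₂ condition), then
`Σ_{i,j}⟨ξ_{e_i}e_j, ξ_{e_j}e_i⟩ = (1/2)|ξ|²`, i.e. `i₂ = (1/2) i₁`. -/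
theorem stmt10 {V : Type*} [NormedAddCommGroup V] [InnerProductSpace ℝ V]
    {m : ℕ} (e : OrthonormalBasis (Fin m) ℝ V)
    (ξ : V →ₗ[ℝ] V →ₗ[ℝ] V)
    (hskew : ∀ X Y Z, ⟪ξ X Y, Z⟫ = -⟪Y, ξ X Z⟫)
    (hcyc : ∀ X Y Z, ⟪ξ X Y, Z⟫ + ⟪ξ Z X, Y⟫ + ⟪ξ Y Z, X⟫ = 0) :
    (∑ i, ∑ j, ⟪ξ (e i) (e j), ξ (e j) (e i)⟫)
      = (1/2 : ℝ) * (∑ i, ∑ j, ⟪ξ (e i) (e j), ξ (e i) (e j)⟫) := by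
  set T : Fin m → Fin m → Fin m → ℝ := fun i j k => ⟪ξ (e i) (e j), e k⟫ with hT
  have hTskew : ∀ i j k, T i j k = - T i k j := by
    intro i j k
    simp only [hT]
    rw [hskew, real_inner_comm]
  have hTcyc : ∀ i j k, T i j k + T k i j + T j k i = 0 := fun i j k => hcyc _ _ _
  have expand : ∀ x y : V, ⟪x, y⟫ = ∑ k, ⟪x, e k⟫ * ⟪y, e k⟫ := by
    intro x y
    rw [← e.sum_inner_mul_inner x y]
    exact Finset.sum_congr rfl fun k _ => by rw [real_inner_comm (e k) y]
  have hLHS : (∑ i, ∑ j, ⟪ξ (e i) (e j), ξ (e j) (e i)⟫)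
      = ∑ i, ∑ j, ∑ k, T i j k * T j i k := by
    exact Finset.sum_congr rfl fun i _ => Finset.sum_congr rfl fun j _ => expand _ _
  have hRHS : (∑ i, ∑ j, ⟪ξ (e i) (e j), ξ (e i) (e j)⟫)
      = ∑ i, ∑ j, ∑ k, T i j k * T i j k := by
    exact Finset.sum_congr rfl fun i _ => Finset.sum_congr rfl fun j _ => expand _ _
  rw [hLHS, hRHS]
  set A : ℝ := ∑ i, ∑ j, ∑ k, T i j k * T i j k with hA
  set B : ℝ := ∑ i, ∑ j, ∑ k, T i j k * T k i j with hB
  have h1 : (∑ i, ∑ j, ∑ k, T i j k * T j i k) = A + B := by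
    rw [hA, hB, ← Finset.sum_add_distrib]
    refine Finset.sum_congr rfl fun i _ => ?_
    rw [← Finset.sum_add_distrib]
    refine Finset.sum_congr rfl fun j _ => ?_
    rw [← Finset.sum_add_distrib]
    refine Finset.sum_congr rfl fun k _ => ?_
    have h2 : T j i k = T i j k + T k i j := by
      have := hTcyc i j k
      have := hTskew j i k
      linarith
    rw [h2]; ring
  have hC : (∑ i, ∑ j, ∑ k, T i j k * T j k i) = B := by
    rw [hB, sum_cyc (fun i j k => T i j k * T k i j)]
    exact Finset.sum_congr rfl fun i _ => Finset.sum_congr rfl fun j _ =>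
      Finset.sum_congr rfl fun k _ => by ring
  have h3 : A + B + B = 0 := by
    nth_rewrite 2 [hC.symm]
    rw [hA, hB]
    rw [← Finset.sum_add_distrib, ← Finset.sum_add_distrib]
    refine Finset.sum_eq_zero fun i _ => ?_
    rw [← Finset.sum_add_distrib, ← Finset.sum_add_distrib]
    refine Finset.sum_eq_zero fun j _ => ?_
    rw [← Finset.sum_add_distrib, ← Finset.sum_add_distrib]
    refine Finset.sum_eq_zero fun k _ => ?_
    have h : T i j k * T i j k + T i j k * T k i j + T i j k * T j k i
        = T i j k * (T i j k + T k i j + T j k i) := by ring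
    rw [h, hTcyc i j k, mul_zero]
  rw [h1]
  linarith
end

section
/- Let V = R^{2n+1} with standard inner product, ζ = e_{2n+1}, and let φ ∈ End(V) satisfy φ² = -id + η⊗ζ and ⟨φX,φY⟩ = ⟨X,Y⟩ - η(X)η(Y), where η(X) = ⟨X,ζ⟩ (a linear almost contact metric structure). Define u(n) = {A ∈ so(2n+1) : Aφ = φA, Aζ = 0}. Then the orthogonal projection of A ∈ so(2n+1) onto the orthogonal complement u(n)^⊥ is A ↦ (1/2)(A + φAφ + η(A·)⊗ζ + η⊗Aζ). -/
open RealInnerProductSpace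

/-- For a linear almost contact metric structure `(φ, η, ζ)` on
`ℝ^{2n+1}` with `ζ = e_{2n+1}`, the orthogonal projection of a skew-symmetric `A`
onto `u(n)^⊥` (w.r.t. `⟨A,B⟩ = -tr(AB)`) is
`P A = (1/2)(A + φAφ + η(A·)⊗ζ + η⊗Aζ)`: namely `A - P A ∈ u(n)` (skew, commutes
with `φ`, kills `ζ`) and `P A` is orthogonal to every element of `u(n)`. -/
theorem stmt12 (n : ℕ)
    (φ A : EuclideanSpace ℝ (Fin (2*n+1)) →ₗ[ℝ] EuclideanSpace ℝ (Fin (2*n+1)))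
    (ζ : EuclideanSpace ℝ (Fin (2*n+1)))
    (hζ : ζ = EuclideanSpace.single (Fin.last (2*n)) 1)
    (hφ2 : ∀ X, φ (φ X) = -X + ⟪X, ζ⟫ • ζ)
    (hφm : ∀ X Y, ⟪φ X, φ Y⟫ = ⟪X, Y⟫ - ⟪X, ζ⟫ * ⟪Y, ζ⟫)
    (hφζ : φ ζ = 0)
    (hA : ∀ X Y, ⟪A X, Y⟫ = -⟪X, A Y⟫) :
    let P : EuclideanSpace ℝ (Fin (2*n+1)) → EuclideanSpace ℝ (Fin (2*n+1)) :=
      fun x => (1/2 : ℝ) • (A x + φ (A (φ x)) + ⟪A x, ζ⟫ • ζ + ⟪x, ζ⟫ • A ζ)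
    (∀ x y, ⟪A x - P x, y⟫ = -⟪x, A y - P y⟫) ∧
    (∀ x, A (φ x) - P (φ x) = φ (A x - P x)) ∧
    (A ζ - P ζ = 0) ∧
    (∀ B : EuclideanSpace ℝ (Fin (2*n+1)) →ₗ[ℝ] EuclideanSpace ℝ (Fin (2*n+1)),
      (∀ X Y, ⟪B X, Y⟫ = -⟪X, B Y⟫) → (∀ X, B (φ X) = φ (B X)) → B ζ = 0 →
      -(∑ i, ⟪P (B (EuclideanSpace.single i 1)), EuclideanSpace.single i 1⟫) = 0) := by
  intro P
  have hζζ : ⟪ζ, ζ⟫ = (1:ℝ) := by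
    rw [hζ]; simp [EuclideanSpace.inner_single_right, EuclideanSpace.single_apply]
  have hηφ : ∀ X, ⟪φ X, ζ⟫ = 0 := by
    intro X
    have h1 : φ (φ (φ X)) = -(φ X) := by
      rw [hφ2 X, map_add, map_neg, map_smul, hφζ, smul_zero, add_zero]
    have h2 : ⟪φ (φ (φ X)), ζ⟫ = 0 := by
      rw [hφ2 (φ X)]
      rw [hφ2 (φ X)] at *
      rw [inner_add_left, inner_neg_left, real_inner_smul_left, hζζ]
      ring
    rw [h1, inner_neg_left] at h2
    linarith
  have hφskew : ∀ X Y, ⟪φ X, Y⟫ = -⟪X, φ Y⟫ := by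
    intro X Y
    have hy : Y = -(φ (φ Y)) + ⟪Y, ζ⟫ • ζ := by rw [hφ2 Y]; abel
    calc ⟪φ X, Y⟫ = ⟪φ X, -(φ (φ Y)) + ⟪Y, ζ⟫ • ζ⟫ := by rw [← hy]
      _ = -⟪φ X, φ (φ Y)⟫ + ⟪Y, ζ⟫ * ⟪φ X, ζ⟫ := by
            rw [inner_add_right, inner_neg_right, real_inner_smul_right]
      _ = -⟪X, φ Y⟫ := by rw [hφm, hηφ, hηφ]; ring
  have hA' : ⟪A ζ, ζ⟫ = (0:ℝ) := by
    have h := hA ζ ζ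
    rw [real_inner_comm ζ (A ζ)] at h
    rw [real_inner_comm]
    linarith [h]
  have hφAφ : ∀ x y, ⟪φ (A (φ x)), y⟫ = -⟪x, φ (A (φ y))⟫ := by
    intro x y
    rw [hφskew (A (φ x)) y, hA (φ x) (φ y), hφskew x (A (φ y))]
    ring
  have hP : P = fun x => (1/2 : ℝ) • (A x + φ (A (φ x)) + ⟪A x, ζ⟫ • ζ + ⟪x, ζ⟫ • A ζ) := rfl
  have goal1 : ∀ x y, ⟪A x - P x, y⟫ = -⟪x, A y - P y⟫ := by
    intro x y
    simp only [hP, inner_sub_left, inner_sub_right, inner_add_left, inner_add_right,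
      real_inner_smul_left, real_inner_smul_right]
    linear_combination (1/2)*hA x y - (1/2)*hφAφ x y - (1/2)*(inner ℝ ζ y : ℝ)*hA x ζ
      + (1/2)*(inner ℝ x (A ζ) : ℝ)*(real_inner_comm y ζ) - (1/2)*(inner ℝ x ζ : ℝ)*hA y ζ
      + (1/2)*(inner ℝ x ζ : ℝ)*(real_inner_comm (A ζ) y)
  have goal2 : ∀ x, A (φ x) - P (φ x) = φ (A x - P x) := by
    intro x
    simp only [hP, map_sub, map_smul, map_add, map_neg, hφ2, hφζ, hηφ, hA (φ x) ζ,
      zero_smul, smul_zero, neg_zero, add_zero]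
    module
  have goal3 : A ζ - P ζ = 0 := by
    simp only [hP, hφζ, map_zero, hζζ, hA', zero_smul, one_smul, add_zero]
    module
  -- goal 4 machinery
  set e : Fin (2*n+1) → EuclideanSpace ℝ (Fin (2*n+1)) :=
    fun i => EuclideanSpace.single i (1:ℝ) with he
  have hip1 : ∀ (v : EuclideanSpace ℝ (Fin (2*n+1))) i, ⟪v, e i⟫ = v i := by
    intro v i
    simp [he, EuclideanSpace.inner_single_right]
  have hip2 : ∀ (v : EuclideanSpace ℝ (Fin (2*n+1))) i, ⟪e i, v⟫ = v i := by
    intro v i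
    simp [he, EuclideanSpace.inner_single_left]
  have hrepr : ∀ (v : EuclideanSpace ℝ (Fin (2*n+1))), ∑ i, v i • e i = v := by
    intro v
    have h := (EuclideanSpace.basisFun (Fin (2*n+1)) ℝ).sum_repr' v
    simp only [EuclideanSpace.basisFun_apply, ← he] at h
    convert h using 2 with i
    rw [hip2]
  have happ : ∀ (L : EuclideanSpace ℝ (Fin (2*n+1)) →ₗ[ℝ] EuclideanSpace ℝ (Fin (2*n+1)))
      (v : EuclideanSpace ℝ (Fin (2*n+1))) (j : Fin (2*n+1)),
      (L v) j = ∑ i, v i * (L (e i)) j := by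
    intro L v j
    conv_lhs => rw [← hrepr v]
    rw [map_sum]
    simp only [map_smul]
    rw [← hip1 (∑ i, v i • L (e i)) j, sum_inner]
    congr 1
    ext i
    rw [real_inner_smul_left, hip1]
  have hipsum : ∀ u w : EuclideanSpace ℝ (Fin (2*n+1)), ⟪u, w⟫ = ∑ j, u j * w j := by
    intro u w
    simp [PiLp.inner_apply, RCLike.inner_apply, conj_trivial]
    exact Finset.sum_congr rfl fun j _ => mul_comm _ _
  have htr : ∀ (D : EuclideanSpace ℝ (Fin (2*n+1)) →ₗ[ℝ] EuclideanSpace ℝ (Fin (2*n+1))),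
      D ζ = 0 → ∑ i, ⟪D (φ (e i)), φ (e i)⟫ = ∑ i, ⟪D (e i), e i⟫ := by
    intro D hDζ
    have h1 : ∀ i j, (φ (e i)) j = -((φ (e j)) i) := by
      intro i j
      rw [← hip1 (φ (e i)) j, hφskew, hip2]
    have key : ∀ j, ∑ i, (φ (e i)) j * (D (φ (e i))) j = (D (e j)) j := by
      intro j
      have step1 : ∑ i, (φ (e i)) j * (D (φ (e i))) j
          = -∑ i, (φ (e j)) i * ((D ∘ₗ φ) (e i)) j := by
        rw [← Finset.sum_neg_distrib]
        refine Finset.sum_congr rfl fun i _ => ?_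
        rw [h1 i j]
        simp only [LinearMap.comp_apply]
        ring
      rw [step1, ← happ (D ∘ₗ φ) (φ (e j)) j]
      simp only [LinearMap.comp_apply]
      rw [hφ2 (e j), map_add, map_neg, map_smul, hDζ, smul_zero, add_zero]
      simp
    calc ∑ i, ⟪D (φ (e i)), φ (e i)⟫
        = ∑ i, ∑ j, (D (φ (e i))) j * (φ (e i)) j :=
          Finset.sum_congr rfl fun i _ => hipsum _ _
      _ = ∑ j, ∑ i, (φ (e i)) j * (D (φ (e i))) j := by
          rw [Finset.sum_comm]
          exact Finset.sum_congr rfl fun j _ => Finset.sum_congr rfl fun i _ => mul_comm _ _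
      _ = ∑ j, (D (e j)) j := Finset.sum_congr rfl fun j _ => key j
      _ = ∑ j, ⟪D (e j), e j⟫ := Finset.sum_congr rfl fun j _ => (hip1 _ _).symm
  have goal4 : ∀ B : EuclideanSpace ℝ (Fin (2*n+1)) →ₗ[ℝ] EuclideanSpace ℝ (Fin (2*n+1)),
      (∀ X Y, ⟪B X, Y⟫ = -⟪X, B Y⟫) → (∀ X, B (φ X) = φ (B X)) → B ζ = 0 →
      -(∑ i, ⟪P (B (e i)), e i⟫) = 0 := by
    intro B hB hBφ hBζ
    have hBz : ∀ x, ⟪B x, ζ⟫ = 0 := by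
      intro x; rw [hB x ζ, hBζ, inner_zero_right]; ring
    have hDζ : (A ∘ₗ B) ζ = 0 := by
      simp [LinearMap.comp_apply, hBζ]
    have hsummand : ∀ i, ⟪P (B (e i)), e i⟫
        = (1/2) * (⟪(A ∘ₗ B) (e i), e i⟫ - ⟪(A ∘ₗ B) (φ (e i)), φ (e i)⟫
            + ⟪(A ∘ₗ B) (e i), ζ⟫ * (ζ i)) := by
      intro i
      simp only [hP]
      rw [real_inner_smul_left, inner_add_left, inner_add_left, inner_add_left,
        real_inner_smul_left, real_inner_smul_left, hBz, zero_mul, add_zero,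
        hφskew (A (φ (B (e i)))) (e i), ← hBφ (e i), hip1 ζ i]
      simp only [LinearMap.comp_apply]
      ring
    have h3 : ∑ i, ⟪(A ∘ₗ B) (e i), ζ⟫ * (ζ i) = 0 := by
      have hz : (A ∘ₗ B) ζ = ∑ i, ζ i • (A ∘ₗ B) (e i) := by
        conv_lhs => rw [← hrepr ζ]
        rw [map_sum]
        simp only [map_smul]
      have : ⟪(A ∘ₗ B) ζ, ζ⟫ = ∑ i, ⟪(A ∘ₗ B) (e i), ζ⟫ * (ζ i) := by
        rw [hz, sum_inner]
        exact Finset.sum_congr rfl fun i _ => by rw [real_inner_smul_left]; ring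
      rw [← this, hDζ, inner_zero_left]
    calc -(∑ i, ⟪P (B (e i)), e i⟫)
        = -((1/2) * ((∑ i, ⟪(A ∘ₗ B) (e i), e i⟫) - (∑ i, ⟪(A ∘ₗ B) (φ (e i)), φ (e i)⟫)
            + (∑ i, ⟪(A ∘ₗ B) (e i), ζ⟫ * (ζ i)))) := by
          rw [Finset.sum_congr rfl fun i _ => hsummand i, ← Finset.mul_sum,
            Finset.sum_add_distrib, Finset.sum_sub_distrib]
      _ = 0 := by rw [htr (A ∘ₗ B) hDζ, h3]; ring
  exact ⟨goal1, goal2, goal3, fun B hB hBφ hBζ => by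
    simpa only [he] using goal4 B hB hBφ hBζ⟩
end

section
/- Suppose a Riemannian manifold M of dimension 2n+1 with almost contact metric structure (φ,η,ζ) satisfies the C(α) curvature condition: R(X,Y,Z,W) = R(X,Y,φZ,φW) + α(-g(X,Z)g(Y,W) + g(X,W)g(Y,Z) + g(X,φZ)g(Y,φW) - g(X,φW)g(Y,φZ)) for a smooth function α. Then s - s* = 4n²α and Ric(ζ,ζ) = 2nα, where s* = Σ_{i,j} R(e_i, e_j, φe_j, φe_i). -/
open RealInnerProductSpace

/-- If an almost contact metric structure of dimension `2n+1`
satisfies the Janssen–Vanhecke `C(α)` curvature condition, then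
`s - s* = 4n²α` and `Ric(ζ,ζ) = 2nα` (pointwise, with `R` the `(0,4)` curvature
tensor and `(e_i)` an orthonormal frame). -/
theorem stmt17 {V : Type*} [NormedAddCommGroup V] [InnerProductSpace ℝ V]
    (n : ℕ) (e : OrthonormalBasis (Fin (2*n+1)) ℝ V)
    (φ : V →ₗ[ℝ] V) (ζ : V) (hζ : ⟪ζ, ζ⟫ = 1) (hφζ : φ ζ = 0)
    (hφ2 : ∀ X, φ (φ X) = -X + ⟪X, ζ⟫ • ζ)
    (hφm : ∀ X Y, ⟪φ X, φ Y⟫ = ⟪X, Y⟫ - ⟪X, ζ⟫ * ⟪Y, ζ⟫)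
    (R : V → V → V → V → ℝ)
    (hR0 : ∀ X Y Z, R X Y Z 0 = 0)
    (α : ℝ)
    (hCα : ∀ X Y Z W, R X Y Z W
      = R X Y (φ Z) (φ W)
        + α * (-(⟪X, Z⟫ * ⟪Y, W⟫) + ⟪X, W⟫ * ⟪Y, Z⟫
          + ⟪X, φ Z⟫ * ⟪Y, φ W⟫ - ⟪X, φ W⟫ * ⟪Y, φ Z⟫)) :
    let s : ℝ := ∑ i, ∑ j, R (e j) (e i) (e i) (e j)
    let sstar : ℝ := ∑ i, ∑ j, R (e i) (e j) (φ (e j)) (φ (e i))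
    s - sstar = 4 * (n : ℝ)^2 * α ∧
    (∑ i, R ζ (e i) (e i) ζ) = 2 * (n : ℝ) * α := by
  intro s sstar
  -- η ∘ φ = 0
  have hζφ : ∀ X : V, ⟪φ X, ζ⟫ = 0 := by
    intro X
    have h3 : φ (φ (φ X)) = - φ X := by
      rw [hφ2 X, map_add, map_neg, map_smul, hφζ, smul_zero, add_zero]
    have h0 : ⟪φ (φ (φ X)), ζ⟫ = 0 := by
      rw [hφ2 (φ X), inner_add_left, inner_neg_left, real_inner_smul_left, hζ]
      ring
    rw [h3, inner_neg_left] at h0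
    linarith
  -- φ is skew-adjoint
  have hskew : ∀ X Y : V, ⟪X, φ Y⟫ = -⟪φ X, Y⟫ := by
    intro X Y
    have h := hφm X (φ Y)
    rw [hζφ Y, mul_zero, sub_zero, hφ2 Y, inner_add_right, inner_neg_right,
      real_inner_smul_right, hζφ X, mul_zero, add_zero] at h
    linarith
  -- orthonormality
  have hee : ∀ i j : Fin (2*n+1), ⟪e i, e j⟫ = if i = j then (1:ℝ) else 0 :=
    orthonormal_iff_ite.mp e.orthonormal
  have hcard : (Finset.univ : Finset (Fin (2*n+1))).card = 2*n+1 := by simp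
  -- ∑ η(e i)² = 1
  have hηsum : ∑ i, ⟪ζ, e i⟫ * ⟪e i, ζ⟫ = 1 := by
    rw [e.sum_inner_mul_inner ζ ζ]; exact hζ
  -- ⟪X, φ X⟫ = 0
  have hXφX : ∀ X : V, ⟪X, φ X⟫ = 0 := by
    intro X
    have h := hskew X X
    rw [real_inner_comm (φ X) X] at h
    rw [real_inner_comm]
    linarith
  -- the C(α) condition specialised to basis vectors
  have key : ∀ i j, R (e j) (e i) (e i) (e j) - R (e j) (e i) (φ (e i)) (φ (e j))
      = α * (-(⟪e j, e i⟫ * ⟪e i, e j⟫) + ⟪e j, e j⟫ * ⟪e i, e i⟫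
          + ⟪e j, φ (e i)⟫ * ⟪e i, φ (e j)⟫ - ⟪e j, φ (e j)⟫ * ⟪e i, φ (e i)⟫) := by
    intro i j
    have h := hCα (e j) (e i) (e i) (e j)
    linarith
  -- inner sum computation for the first claim
  have hsum1 : ∀ i, (∑ j, (-(⟪e j, e i⟫ * ⟪e i, e j⟫) + ⟪e j, e j⟫ * ⟪e i, e i⟫
          + ⟪e j, φ (e i)⟫ * ⟪e i, φ (e j)⟫ - ⟪e j, φ (e j)⟫ * ⟪e i, φ (e i)⟫))
      = -1 + (2*(n:ℝ)+1) - (1 - ⟪e i, ζ⟫ * ⟪e i, ζ⟫) := by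
    intro i
    have h1 : ∑ j, -(⟪e j, e i⟫ * ⟪e i, e j⟫) = -1 := by
      simp [hee]
    have h2 : ∑ j : Fin (2*n+1), ⟪e j, e j⟫ * ⟪e i, e i⟫ = 2*(n:ℝ)+1 := by
      simp [hee]
    have h3 : ∑ j, ⟪e j, φ (e i)⟫ * ⟪e i, φ (e j)⟫ = -(1 - ⟪e i, ζ⟫ * ⟪e i, ζ⟫) := by
      have hterm : ∀ j, ⟪e j, φ (e i)⟫ * ⟪e i, φ (e j)⟫
          = -(⟪φ (e i), e j⟫ * ⟪e j, φ (e i)⟫) := by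
        intro j
        rw [hskew (e i) (e j), real_inner_comm (e j) (φ (e i))]
        ring
      calc ∑ j, ⟪e j, φ (e i)⟫ * ⟪e i, φ (e j)⟫
          = ∑ j, -(⟪φ (e i), e j⟫ * ⟪e j, φ (e i)⟫) :=
            Finset.sum_congr rfl fun j _ => hterm j
        _ = -∑ j, ⟪φ (e i), e j⟫ * ⟪e j, φ (e i)⟫ := by
            rw [Finset.sum_neg_distrib]
        _ = -⟪φ (e i), φ (e i)⟫ := by rw [e.sum_inner_mul_inner]
        _ = -(1 - ⟪e i, ζ⟫ * ⟪e i, ζ⟫) := by rw [hφm, hee]; simp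
    have h4 : ∑ j, ⟪e j, φ (e j)⟫ * ⟪e i, φ (e i)⟫ = 0 := by
      simp [hXφX]
    calc (∑ j, (-(⟪e j, e i⟫ * ⟪e i, e j⟫) + ⟪e j, e j⟫ * ⟪e i, e i⟫
          + ⟪e j, φ (e i)⟫ * ⟪e i, φ (e j)⟫ - ⟪e j, φ (e j)⟫ * ⟪e i, φ (e i)⟫))
        = (∑ j, -(⟪e j, e i⟫ * ⟪e i, e j⟫)) + (∑ j, ⟪e j, e j⟫ * ⟪e i, e i⟫)
          + (∑ j, ⟪e j, φ (e i)⟫ * ⟪e i, φ (e j)⟫)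
          - (∑ j, ⟪e j, φ (e j)⟫ * ⟪e i, φ (e i)⟫) := by
          simp only [Finset.sum_sub_distrib, Finset.sum_add_distrib]
      _ = -1 + (2*(n:ℝ)+1) - (1 - ⟪e i, ζ⟫ * ⟪e i, ζ⟫) := by
          rw [h1, h2, h3, h4]; ring
  have hx : ∑ i, ⟪e i, ζ⟫ * ⟪e i, ζ⟫ = 1 := by
    rw [← hηsum]
    exact Finset.sum_congr rfl fun i _ => by rw [real_inner_comm ζ (e i)]
  constructor
  · -- s - s* = 4n²α
    have hswap : sstar = ∑ i, ∑ j, R (e j) (e i) (φ (e i)) (φ (e j)) := Finset.sum_comm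
    have hsplit : s - sstar = ∑ i, ∑ j,
        (R (e j) (e i) (e i) (e j) - R (e j) (e i) (φ (e i)) (φ (e j))) := by
      rw [hswap]
      simp [s, Finset.sum_sub_distrib]
    rw [hsplit]
    calc ∑ i, ∑ j, (R (e j) (e i) (e i) (e j) - R (e j) (e i) (φ (e i)) (φ (e j)))
        = ∑ i, α * (-1 + (2*(n:ℝ)+1) - (1 - ⟪e i, ζ⟫ * ⟪e i, ζ⟫)) := by
          refine Finset.sum_congr rfl (fun i _ => ?_)
          rw [Finset.sum_congr rfl (fun j _ => key i j), ← Finset.mul_sum, hsum1 i]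
      _ = ∑ i, (α * (2*(n:ℝ)-1) + α * (⟪e i, ζ⟫ * ⟪e i, ζ⟫)) :=
          Finset.sum_congr rfl fun i _ => by ring
      _ = (2*n+1 : ℕ) • (α * (2*(n:ℝ)-1)) + α * ∑ i, ⟪e i, ζ⟫ * ⟪e i, ζ⟫ := by
          rw [Finset.sum_add_distrib, Finset.sum_const, hcard, ← Finset.mul_sum]
      _ = 4 * (n : ℝ)^2 * α := by
          rw [hx, nsmul_eq_mul]
          push_cast
          ring
  · -- Ric(ζ,ζ) = 2nα
    have hterm : ∀ i, R ζ (e i) (e i) ζ = α * (1 - ⟪ζ, e i⟫ * ⟪e i, ζ⟫) := by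
      intro i
      have h11 : ⟪e i, e i⟫ = (1:ℝ) := by simp [hee]
      have h := hCα ζ (e i) (e i) ζ
      rw [hφζ, hR0, hζ, inner_zero_right, inner_zero_right, h11] at h
      rw [h]
      ring
    rw [Finset.sum_congr rfl (fun i _ => hterm i), ← Finset.mul_sum,
      Finset.sum_sub_distrib, hηsum, Finset.sum_const, hcard, nsmul_eq_mul]
    push_cast
    ring
end

section
/- Let (M,g) be a Riemannian manifold and ζ a unit vector field with orthogonal distribution D = ker g(·,ζ). Then the following divergence formula holds: div(-(div ζ)ζ + ∇_ζ ζ) = Ric(ζ,ζ) - (div ζ)² - |T|² + |B|², where B(X,Y) = (1/2)g(∇_X Y + ∇_Y X, ζ) and T(X,Y) = (1/2)g([X,Y], ζ) for X,Y ∈ D are the second fundamental form and integrability tensor of D, and |T|², |B|² are squared norms over an orthonormal frame of D. -/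
/-- For a unit vector field `ζ` with orthogonal distribution `D`,
the divergence formula
`div(-(div ζ)ζ + ∇_ζ ζ) = Ric(ζ,ζ) - (div ζ)² - |T|² + |B|²` holds, where
`B(X,Y) = (1/2)g(∇_X Y + ∇_Y X, ζ)` and `T(X,Y) = (1/2)g([X,Y], ζ)` on an
orthonormal frame `(e_i)` of `D`.  Vector fields are modelled as a module `V`
over the ring of functions `A`, with a derivation `act`, torsion-free metric
connection `conn`, and `div X = Σ_i g(∇_{e_i}X, e_i) + g(∇_ζ X, ζ)`. -/
theorem stmt19 {A : Type*} [CommRing A] [Algebra ℝ A]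
    {V : Type*} [AddCommGroup V] [Module A V]
    (g : V →ₗ[A] V →ₗ[A] A) (hgsymm : ∀ X Y, g X Y = g Y X)
    (act : V → A → A)
    (hact_add : ∀ X a b, act X (a + b) = act X a + act X b)
    (hder : ∀ X a b, act X (a * b) = act X a * b + a * act X b)
    (conn : V → V → V) (bracket : V → V → V)
    (hadd1 : ∀ X Y Z, conn (X + Y) Z = conn X Z + conn Y Z)
    (hadd2 : ∀ X Y Z, conn X (Y + Z) = conn X Y + conn X Z)
    (hsmul1 : ∀ (a : A) X Y, conn (a • X) Y = a • conn X Y)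
    (hLeib : ∀ X (a : A) Y, conn X (a • Y) = act X a • Y + a • conn X Y)
    (hcompat : ∀ X Y Z, act X (g Y Z) = g (conn X Y) Z + g Y (conn X Z))
    (htors : ∀ X Y, conn X Y - conn Y X = bracket X Y)
    (ζ : V) (hζ : g ζ ζ = 1)
    {m : ℕ} (e : Fin m → V)
    (horth : ∀ i j, g (e i) (e j) = if i = j then 1 else 0)
    (heζ : ∀ i, g (e i) ζ = 0)
    (hcomplete : ∀ X, (∑ i, g X (e i) • e i) + g X ζ • ζ = X) :
    let R : V → V → V → V := fun X Y Z =>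
      conn X (conn Y Z) - conn Y (conn X Z) - conn (bracket X Y) Z
    let div : V → A := fun X => (∑ i, g (conn (e i) X) (e i)) + g (conn ζ X) ζ
    let half : A := algebraMap ℝ A (1/2)
    let Bf : Fin m → Fin m → A := fun i j =>
      half * g (conn (e i) (e j) + conn (e j) (e i)) ζ
    let Tf : Fin m → Fin m → A := fun i j => half * g (bracket (e i) (e j)) ζ
    div (-(div ζ • ζ) + conn ζ ζ)
      = (∑ i, g (R (e i) ζ ζ) (e i)) - (div ζ)^2
        - (∑ i, ∑ j, (Tf i j)^2) + (∑ i, ∑ j, (Bf i j)^2) := by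
  intro R div half Bf Tf
  -- basic scalar facts
  have hact0 : ∀ X, act X (0:A) = 0 := by
    intro X
    have h := hact_add X 0 0
    rw [add_zero] at h
    exact add_eq_left.mp h.symm
  have hact1 : ∀ X, act X (1:A) = 0 := by
    intro X
    have h := hder X 1 1
    simp only [mul_one, one_mul] at h
    exact add_eq_left.mp h.symm
  have hactneg : ∀ X (r : A), act X (-r) = -act X r := by
    intro X r
    have h := hact_add X r (-r)
    rw [add_neg_cancel, hact0] at h
    exact eq_neg_of_add_eq_zero_right h.symm
  have h2half : half + half = 1 := by
    show algebraMap ℝ A (1/2) + algebraMap ℝ A (1/2) = 1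
    rw [← map_add]
    norm_num
  have htwo : ∀ x : A, x + x = 0 → x = 0 := by
    intro x h
    calc x = (half + half) * x := by rw [h2half, one_mul]
    _ = half * (x + x) := by ring
    _ = 0 := by rw [h, mul_zero]
  have hXζ : ∀ X, g (conn X ζ) ζ = 0 := by
    intro X
    have h := hcompat X ζ ζ
    rw [hζ, hact1, hgsymm ζ (conn X ζ)] at h
    exact htwo _ h.symm
  have hXe : ∀ X i, g (conn X (e i)) ζ = -(g (conn X ζ) (e i)) := by
    intro X i
    have h := hcompat X (e i) ζ
    rw [heζ, hact0] at h
    have h2 := eq_neg_of_add_eq_zero_left h.symm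
    rw [h2, hgsymm]
  have hζe : ∀ i, g ζ (e i) = 0 := fun i => (hgsymm ζ (e i)).trans (heζ i)
  have hconn_sum : ∀ (v : Fin m → V) (Y : V),
      conn (∑ i, v i) Y = ∑ i, conn (v i) Y := by
    intro v Y
    exact map_sum (AddMonoidHom.mk' (fun X => conn X Y) (fun a b => hadd1 a b Y)) v Finset.univ
  have hexp : ∀ W Y Z, g (conn W Y) Z
      = (∑ j, g W (e j) * g (conn (e j) Y) Z) + g W ζ * g (conn ζ Y) Z := by
    intro W Y Z
    conv_lhs => rw [← hcomplete W]
    rw [hadd1, hconn_sum]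
    simp only [hsmul1]
    simp [map_add, map_sum, map_smul, LinearMap.add_apply, LinearMap.sum_apply,
      LinearMap.smul_apply, smul_eq_mul]
  have hgexp : ∀ X W, g X W
      = (∑ j, g W (e j) * g X (e j)) + g W ζ * g X ζ := by
    intro X W
    conv_lhs => rw [← hcomplete W]
    simp [map_add, map_sum, map_smul, smul_eq_mul]
  -- shorthand equalities
  have h4 : ((∑ i, g (conn (e i) ζ) (e i)) + g (conn ζ ζ) ζ)
      = ∑ i, g (conn (e i) ζ) (e i) := by rw [hXζ, add_zero]
  -- unfold div and clean up div ζ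
  show (∑ i, g (conn (e i) (-(((∑ i, g (conn (e i) ζ) (e i)) + g (conn ζ ζ) ζ) • ζ) + conn ζ ζ)) (e i))
      + g (conn ζ (-(((∑ i, g (conn (e i) ζ) (e i)) + g (conn ζ ζ) ζ) • ζ) + conn ζ ζ)) ζ
      = (∑ i, g (R (e i) ζ ζ) (e i))
        - (((∑ i, g (conn (e i) ζ) (e i)) + g (conn ζ ζ) ζ))^2
        - (∑ i, ∑ j, (Tf i j)^2) + (∑ i, ∑ j, (Bf i j)^2)
  simp only [h4]
  -- key expansion of the main vector field
  have hkey : ∀ X Y, g (conn X (-((∑ i, g (conn (e i) ζ) (e i)) • ζ) + conn ζ ζ)) Y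
      = -(act X (∑ i, g (conn (e i) ζ) (e i)) * g ζ Y)
        - (∑ i, g (conn (e i) ζ) (e i)) * g (conn X ζ) Y
        + g (conn X (conn ζ ζ)) Y := by
    intro X Y
    rw [hadd2, ← neg_smul, hLeib, hactneg]
    simp only [map_add, LinearMap.add_apply, map_smul, LinearMap.smul_apply, smul_eq_mul]
    ring
  -- the four main sum identities
  have h1 : (∑ i, g (conn (e i) (-((∑ i, g (conn (e i) ζ) (e i)) • ζ) + conn ζ ζ)) (e i))
      = -((∑ i, g (conn (e i) ζ) (e i)) * (∑ i, g (conn (e i) ζ) (e i)))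
        + ∑ i, g (conn (e i) (conn ζ ζ)) (e i) := by
    calc (∑ i, g (conn (e i) (-((∑ i, g (conn (e i) ζ) (e i)) • ζ) + conn ζ ζ)) (e i))
        = ∑ i, (-((∑ k, g (conn (e k) ζ) (e k)) * g (conn (e i) ζ) (e i))
            + g (conn (e i) (conn ζ ζ)) (e i)) := by
          refine Finset.sum_congr rfl fun i _ => ?_
          rw [hkey, hζe]; ring
    _ = _ := by
          rw [Finset.sum_add_distrib, Finset.sum_neg_distrib, ← Finset.mul_sum]
  have hζζζ : g (conn ζ (conn ζ ζ)) ζ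
      = -(∑ j, g (conn ζ ζ) (e j) * g (conn ζ ζ) (e j)) := by
    have h := hcompat ζ (conn ζ ζ) ζ
    rw [hXζ, hact0] at h
    have h2 : g (conn ζ ζ) (conn ζ ζ)
        = ∑ j, g (conn ζ ζ) (e j) * g (conn ζ ζ) (e j) := by
      rw [hgexp (conn ζ ζ) (conn ζ ζ), hXζ, mul_zero, add_zero]
    have h3 := eq_neg_of_add_eq_zero_left h.symm
    rw [h3, h2]
  have hactF : act ζ (∑ i, g (conn (e i) ζ) (e i))
      = (∑ i, g (conn ζ (conn (e i) ζ)) (e i))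
        + ∑ i, ∑ j, g (conn ζ (e i)) (e j) * g (conn (e i) ζ) (e j) := by
    have hact_sum : ∀ (v : Fin m → A), act ζ (∑ i, v i) = ∑ i, act ζ (v i) :=
      fun v => map_sum (AddMonoidHom.mk' (act ζ) (hact_add ζ)) v Finset.univ
    rw [hact_sum, ← Finset.sum_add_distrib]
    refine Finset.sum_congr rfl fun i _ => ?_
    show act ζ (g (conn (e i) ζ) (e i)) = _
    rw [hcompat, hgexp (conn (e i) ζ) (conn ζ (e i)), hXζ, mul_zero, add_zero]
  have h2 : g (conn ζ (-((∑ i, g (conn (e i) ζ) (e i)) • ζ) + conn ζ ζ)) ζ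
      = -(((∑ i, g (conn ζ (conn (e i) ζ)) (e i))
          + ∑ i, ∑ j, g (conn ζ (e i)) (e j) * g (conn (e i) ζ) (e j)))
        - (∑ j, g (conn ζ ζ) (e j) * g (conn ζ ζ) (e j)) := by
    rw [hkey, hζ, hXζ, hζζζ, hactF]
    ring
  -- curvature sum
  have hRe : ∀ i, g (R (e i) ζ ζ) (e i)
      = g (conn (e i) (conn ζ ζ)) (e i) - g (conn ζ (conn (e i) ζ)) (e i)
        - ((∑ j, (g (conn (e i) ζ) (e j) - g (conn ζ (e i)) (e j))
              * g (conn (e j) ζ) (e i))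
            + g (conn ζ ζ) (e i) * g (conn ζ ζ) (e i)) := by
    intro i
    show g (conn (e i) (conn ζ ζ) - conn ζ (conn (e i) ζ) - conn (bracket (e i) ζ) ζ) (e i) = _
    have hb : g (conn (bracket (e i) ζ) ζ) (e i)
        = (∑ j, (g (conn (e i) ζ) (e j) - g (conn ζ (e i)) (e j))
            * g (conn (e j) ζ) (e i))
          + g (conn ζ ζ) (e i) * g (conn ζ ζ) (e i) := by
      have hb1 : ∀ Z, g (bracket (e i) ζ) Z
          = g (conn (e i) ζ) Z - g (conn ζ (e i)) Z := by
        intro Z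
        rw [← htors, map_sub, LinearMap.sub_apply]
      have hb2 : g (bracket (e i) ζ) ζ = g (conn ζ ζ) (e i) := by
        rw [hb1, hXζ, hXe ζ i]; ring
      rw [hexp (bracket (e i) ζ) ζ (e i), hb2]
      congr 1
      exact Finset.sum_congr rfl fun j _ => by rw [hb1]
    rw [map_sub, map_sub, LinearMap.sub_apply, LinearMap.sub_apply, hb]
  have h3 : (∑ i, g (R (e i) ζ ζ) (e i))
      = (∑ i, g (conn (e i) (conn ζ ζ)) (e i))
        - (∑ i, g (conn ζ (conn (e i) ζ)) (e i))
        - (((∑ i, ∑ j, g (conn (e i) ζ) (e j) * g (conn (e j) ζ) (e i))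
            - (∑ i, ∑ j, g (conn ζ (e i)) (e j) * g (conn (e j) ζ) (e i)))
          + ∑ i, g (conn ζ ζ) (e i) * g (conn ζ ζ) (e i)) := by
    calc (∑ i, g (R (e i) ζ ζ) (e i))
        = ∑ i, (g (conn (e i) (conn ζ ζ)) (e i) - g (conn ζ (conn (e i) ζ)) (e i)
          - ((∑ j, (g (conn (e i) ζ) (e j) - g (conn ζ (e i)) (e j))
                * g (conn (e j) ζ) (e i))
              + g (conn ζ ζ) (e i) * g (conn ζ ζ) (e i))) :=
          Finset.sum_congr rfl fun i _ => hRe i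
    _ = _ := by
        rw [Finset.sum_sub_distrib, Finset.sum_sub_distrib, Finset.sum_add_distrib]
        congr 2
        rw [← Finset.sum_sub_distrib]
        refine Finset.sum_congr rfl fun i _ => ?_
        rw [← Finset.sum_sub_distrib]
        exact Finset.sum_congr rfl fun j _ => by ring
  -- B and T
  have hB : ∀ i j, Bf i j
      = -(half * (g (conn (e i) ζ) (e j) + g (conn (e j) ζ) (e i))) := by
    intro i j
    show half * g (conn (e i) (e j) + conn (e j) (e i)) ζ = _
    rw [map_add, LinearMap.add_apply, hXe (e i) j, hXe (e j) i]
    ring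
  have hT : ∀ i j, Tf i j
      = -(half * (g (conn (e i) ζ) (e j) - g (conn (e j) ζ) (e i))) := by
    intro i j
    show half * g (bracket (e i) (e j)) ζ = _
    rw [← htors, map_sub, LinearMap.sub_apply, hXe (e i) j, hXe (e j) i]
    ring
  have hsumBT : (∑ i, ∑ j, (Bf i j)^2) - (∑ i, ∑ j, (Tf i j)^2)
      = ∑ i, ∑ j, g (conn (e i) ζ) (e j) * g (conn (e j) ζ) (e i) := by
    rw [← Finset.sum_sub_distrib]
    refine Finset.sum_congr rfl fun i _ => ?_
    rw [← Finset.sum_sub_distrib]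
    refine Finset.sum_congr rfl fun j _ => ?_
    rw [hB, hT]
    linear_combination (half + half + 1)
      * (g (conn (e i) ζ) (e j) * g (conn (e j) ζ) (e i)) * h2half
  have hdanti : ∀ i j, g (conn ζ (e j)) (e i) = -(g (conn ζ (e i)) (e j)) := by
    intro i j
    have h := hcompat ζ (e i) (e j)
    rw [horth] at h
    have h0 : act ζ (if i = j then (1:A) else 0) = 0 := by
      split
      · exact hact1 ζ
      · exact hact0 ζ
    rw [h0, hgsymm (e i) (conn ζ (e j))] at h
    exact eq_neg_of_add_eq_zero_right h.symm
  have hswap : (∑ i, ∑ j, g (conn ζ (e i)) (e j) * g (conn (e j) ζ) (e i))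
      = -(∑ i, ∑ j, g (conn ζ (e i)) (e j) * g (conn (e i) ζ) (e j)) := by
    rw [Finset.sum_comm, ← Finset.sum_neg_distrib]
    refine Finset.sum_congr rfl fun i _ => ?_
    rw [← Finset.sum_neg_distrib]
    refine Finset.sum_congr rfl fun j _ => ?_
    rw [hdanti]
    ring
  rw [h1, h2, h3]
  linear_combination -hswap - hsumBT
end
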